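/- Proposition S2 (equivalence with covariates in stratified randomized experiments): (a) For data (z_i, c_i, x_i, y_i), i = 1,...,n, with u_i = (x_iᵀ, y_iᵀ)ᵀ, u = (u_1,...,u_n)ᵀ, uᵀ(I_n − H_g)u invertible, and zᵀ(I_n − H_g)z ≠ 0, the stacked inverse regression coefficient satisfies β̂_SRU,A = {n^{-1} zᵀ(I_n − H_g) z}{n^{-1} uᵀ(I_n − H_g) u}^{-1} τ̂_SRU. (b) Under stratified randomization, i.e., Z independent of (Y(1), Y(0), X) given C, with π_s = P(C=s) > 0, p_[s] = P(Z=1|C=s) ∈ (0,1), and E{cov(U | C)} invertible for U = (Xᵀ, Yᵀ)ᵀ, the population coefficients satisfy β_SRU,A = E{var(Z | C)} E{cov(U | C)}^{-1} τ_SRU, where E{var(Z | C)} = Σ_s π_s p_[s](1−p_[s]). -/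

import Mathlib

open MeasureTheory ProbabilityTheory Matrix Finset

private lemma int_mul_of_memL2 {Ω : Type*} [MeasurableSpace Ω] {μ : Measure Ω}
    {f g : Ω → ℝ} (hf : MemLp f 2 μ) (hg : MemLp g 2 μ) :
    Integrable (fun ω => f ω * g ω) μ := by
  have h : Integrable (fun ω => (f ω ^ 2 + g ω ^ 2) / 2) μ :=
    (hf.integrable_sq.add hg.integrable_sq).div_const 2
  refine h.mono' (hf.aestronglyMeasurable.mul hg.aestronglyMeasurable)
    (Filter.Eventually.of_forall fun ω => ?_)
  rw [Real.norm_eq_abs, abs_mul]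
  nlinarith [sq_nonneg (|f ω| - |g ω|), abs_nonneg (f ω), abs_nonneg (g ω),
    sq_abs (f ω), sq_abs (g ω)]

private lemma sum_setIntegral_fiber {Ω : Type*} [MeasurableSpace Ω] (μ : Measure Ω)
    {S : ℕ} {C : Ω → Fin S} (hC : Measurable C) {f : Ω → ℝ} (hf : Integrable f μ) :
    ∑ s : Fin S, ∫ ω in {ω | C ω = s}, f ω ∂μ = ∫ ω, f ω ∂μ := by
  have hmeas : ∀ s : Fin S, MeasurableSet {ω | C ω = s} := fun s =>
    hC (measurableSet_singleton s)
  have hdisj : Pairwise (Function.onFun Disjoint fun s : Fin S => {ω | C ω = s}) := by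
    intro s t hst
    exact Set.disjoint_left.2 fun ω hs ht => hst ((hs : C ω = s).symm.trans ht)
  have hunion : (⋃ s : Fin S, {ω | C ω = s}) = Set.univ := by ext ω; simp
  rw [← setIntegral_univ (μ := μ), ← hunion,
    integral_iUnion hmeas hdisj hf.integrableOn, tsum_fintype]


/-- Proposition S2: covariate-adjusted equivalence in stratified randomized experiments.
(a) the sample identity
`β̂_SRU,A = {n⁻¹zᵀ(I−H_g)z}{n⁻¹uᵀ(I−H_g)u}⁻¹ τ̂_SRU`;
(b) under stratified randomization,
`β_SRU,A = E{var(Z|C)} E{cov(U|C)}⁻¹ τ_SRU` with `E{var(Z|C)} = Σ_s π_s p_[s](1−p_[s])`. -/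
theorem inverse_regression_stratified_covariate_adjusted_equivalence
    -- (a) sample-level data
    (n K L S : ℕ) (hn : 0 < n)
    (zf : Fin n → ℝ) (cf : Fin n → Fin S)
    (xm : Matrix (Fin n) (Fin K) ℝ) (ym : Matrix (Fin n) (Fin L) ℝ)
    (hzf01 : ∀ i, zf i = 0 ∨ zf i = 1)
    (hstrata : ∀ s : Fin S, ∃ i, cf i = s)
    (um : Matrix (Fin n) (Fin (K + L)) ℝ)
    (hum : um = Matrix.of fun i k => Fin.append (fun a => xm i a) (fun b => ym i b) k)
    (g : Matrix (Fin n) (Fin S) ℝ)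
    (hg : g = Matrix.of fun i s => if cf i = s then (1 : ℝ) else 0)
    (Hg : Matrix (Fin n) (Fin n) ℝ) (hHg : Hg = g * (gᵀ * g)⁻¹ * gᵀ)
    (βhatSRUA : Fin (K + L) → ℝ)
    (hβhatSRUA : βhatSRUA = (umᵀ * (1 - Hg) * um)⁻¹ *ᵥ (umᵀ *ᵥ ((1 - Hg) *ᵥ zf)))
    (τhatSRU : Fin (K + L) → ℝ)
    (hτhatSRU : τhatSRU = (zf ⬝ᵥ ((1 - Hg) *ᵥ zf))⁻¹ • (umᵀ *ᵥ ((1 - Hg) *ᵥ zf)))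
    (hzz : zf ⬝ᵥ ((1 - Hg) *ᵥ zf) ≠ 0)
    (huuInv : IsUnit (umᵀ * (1 - Hg) * um).det)
    -- (b) population-level data
    {Ω : Type*} [MeasurableSpace Ω] (μ : Measure Ω) [IsProbabilityMeasure μ]
    (Z : Ω → ℝ) (C : Ω → Fin S) (X : Ω → Fin K → ℝ) (Y1 Y0 : Ω → Fin L → ℝ)
    (hZmeas : Measurable Z) (hCmeas : Measurable C) (hXmeas : Measurable X)
    (hY1meas : Measurable Y1) (hY0meas : Measurable Y0)
    (hZ01 : ∀ ω, Z ω = 0 ∨ Z ω = 1)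
    (hXL2 : MemLp X 2 μ) (hY1L2 : MemLp Y1 2 μ) (hY0L2 : MemLp Y0 2 μ)
    (condμ : Fin S → Measure Ω)
    (hcondμ : condμ = fun s => ProbabilityTheory.cond μ {ω | C ω = s})
    -- stratified randomization: Z ⫫ (Y(1), Y(0), X) given C
    (hindep : ∀ s, IndepFun Z (fun ω => (Y1 ω, Y0 ω, X ω)) (condμ s))
    (π : Fin S → ℝ) (hπ : π = fun s => (μ {ω | C ω = s}).toReal)
    (hπpos : ∀ s, 0 < π s)
    (p : Fin S → ℝ) (hp : p = fun s => (condμ s {ω | Z ω = 1}).toReal)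
    (hp01 : ∀ s, 0 < p s ∧ p s < 1)
    -- observed outcome and stacked vector U = (Xᵀ, Yᵀ)ᵀ
    (Y : Ω → Fin L → ℝ) (hY : Y = fun ω j => Z ω * Y1 ω j + (1 - Z ω) * Y0 ω j)
    (U : Ω → Fin (K + L) → ℝ)
    (hU : U = fun ω => Fin.append (fun a => X ω a) (fun b => Y ω b))
    -- within-stratum moments
    (mZ : Fin S → ℝ) (hmZ : mZ = fun s => ∫ ω, Z ω ∂(condμ s))
    (mU : Fin S → Fin (K + L) → ℝ) (hmU : mU = fun s j => ∫ ω, U ω j ∂(condμ s))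
    (varZc : Fin S → ℝ) (hvarZc : varZc = fun s => ∫ ω, (Z ω - mZ s) ^ 2 ∂(condμ s))
    (covUc : Fin S → Matrix (Fin (K + L)) (Fin (K + L)) ℝ)
    (hcovUc : covUc = fun s => Matrix.of fun i j =>
      ∫ ω, (U ω i - mU s i) * (U ω j - mU s j) ∂(condμ s))
    (EvarZC : ℝ) (hEvarZC : EvarZC = ∑ s, π s * varZc s)
    (EcovUC : Matrix (Fin (K + L)) (Fin (K + L)) ℝ)
    (hEcovUC : EcovUC = ∑ s, π s • covUc s)
    (hEcovUCInv : IsUnit EcovUC.det)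
    -- variance-weighted coefficients of Z from the regressions of U on (G, Z)
    (τSRU : Fin (K + L) → ℝ)
    (hτSRU : τSRU = EvarZC⁻¹ • fun j => ∫ ω, (Z ω - mZ (C ω)) * U ω j ∂μ)
    -- population inverse regression coefficient (Frisch–Waugh–Lovell form)
    (EUtilUtil : Matrix (Fin (K + L)) (Fin (K + L)) ℝ)
    (hEUtilUtil : EUtilUtil = Matrix.of fun i j =>
      ∫ ω, (U ω i - mU (C ω) i) * (U ω j - mU (C ω) j) ∂μ)
    (EUtilZ : Fin (K + L) → ℝ)
    (hEUtilZ : EUtilZ = fun j => ∫ ω, (U ω j - mU (C ω) j) * Z ω ∂μ)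
    (βSRUA : Fin (K + L) → ℝ) (hβSRUA : βSRUA = EUtilUtil⁻¹ *ᵥ EUtilZ) :
    βhatSRUA = ((n : ℝ)⁻¹ * (zf ⬝ᵥ ((1 - Hg) *ᵥ zf))) •
      (((n : ℝ)⁻¹ • (umᵀ * (1 - Hg) * um))⁻¹ *ᵥ τhatSRU) ∧
    βSRUA = EvarZC • (EcovUC⁻¹ *ᵥ τSRU) ∧
    EvarZC = ∑ s, π s * (p s * (1 - p s)) := by
  
  -- ====================  Part (a)  ====================
  have hn' : (n : ℝ) ≠ 0 := Nat.cast_ne_zero.2 hn.ne'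
  have parta : βhatSRUA = ((n : ℝ)⁻¹ * (zf ⬝ᵥ ((1 - Hg) *ᵥ zf))) •
      (((n : ℝ)⁻¹ • (umᵀ * (1 - Hg) * um))⁻¹ *ᵥ τhatSRU) := by
    have hinv : ((n : ℝ)⁻¹ • (umᵀ * (1 - Hg) * um))⁻¹
        = (n : ℝ) • (umᵀ * (1 - Hg) * um)⁻¹ := by
      apply Matrix.inv_eq_right_inv
      rw [Matrix.smul_mul, Matrix.mul_smul, smul_smul, inv_mul_cancel₀ hn',
        one_smul, Matrix.mul_nonsing_inv _ huuInv]
    rw [hβhatSRUA, hτhatSRU, hinv, Matrix.mulVec_smul, Matrix.smul_mulVec]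
    simp only [smul_smul]
    rw [show ((n : ℝ)⁻¹ * (zf ⬝ᵥ ((1 - Hg) *ᵥ zf)) *
      ((zf ⬝ᵥ ((1 - Hg) *ᵥ zf))⁻¹ * (n : ℝ))) = 1 from by field_simp, one_smul]
  -- ====================  Setup for parts (b), (c)  ====================
  have hStmeas : ∀ s : Fin S, MeasurableSet {ω | C ω = s} := fun s =>
    hCmeas (measurableSet_singleton s)
  have hμSt : ∀ s, (μ {ω | C ω = s}).toReal = π s := fun s => by rw [hπ]
  have hμne : ∀ s, μ {ω | C ω = s} ≠ 0 := by
    intro s h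
    have h2 := hπpos s
    rw [hπ] at h2
    simp only [h, ENNReal.toReal_zero, lt_self_iff_false] at h2
  have hprob : ∀ s, IsProbabilityMeasure (condμ s) := by
    intro s
    rw [hcondμ]
    exact cond_isProbabilityMeasure (hμne s)
  -- transfer between conditional integrals and set integrals
  have hcondInt : ∀ (s : Fin S) (f : Ω → ℝ),
      π s * ∫ ω, f ω ∂(condμ s) = ∫ ω in {ω | C ω = s}, f ω ∂μ := by
    intro s f
    rw [hcondμ]
    show π s * ∫ ω, f ω ∂((μ {ω | C ω = s})⁻¹ • μ.restrict {ω | C ω = s}) = _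
    rw [integral_smul_measure, ENNReal.toReal_inv, hμSt s, smul_eq_mul, ← mul_assoc,
      mul_inv_cancel₀ (hπpos s).ne', one_mul]
  -- ====================  Part (c)  ====================
  have hZind : ∀ ω, Z ω = ({ω | Z ω = 1}).indicator (fun _ => (1 : ℝ)) ω := by
    intro ω
    rcases hZ01 ω with h | h <;>
      simp [Set.indicator_apply, Set.mem_setOf_eq, h]
  have hmZp : ∀ s, mZ s = p s := by
    intro s
    rw [hmZ, hp]
    simp only
    rw [integral_congr_ae (ae_of_all _ hZind),
      integral_indicator_const (1 : ℝ)
        (show MeasurableSet {ω | Z ω = 1} from hZmeas (measurableSet_singleton 1)),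
      smul_eq_mul, mul_one, measureReal_def]
  have hvar : ∀ s, varZc s = p s * (1 - p s) := by
    intro s
    haveI := hprob s
    have hpt : ∀ ω, (Z ω - mZ s) ^ 2 = (1 - 2 * mZ s) * Z ω + mZ s ^ 2 := by
      intro ω; rcases hZ01 ω with h | h <;> rw [h] <;> ring
    have hZint : Integrable Z (condμ s) := by
      refine (integrable_const (1 : ℝ)).mono' hZmeas.aestronglyMeasurable (ae_of_all _ ?_)
      intro ω; rcases hZ01 ω with h | h <;> simp [h]
    have hintZ : ∫ ω, Z ω ∂(condμ s) = p s := ((congrFun hmZ s).symm).trans (hmZp s)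
    rw [hvarZc]
    simp only
    rw [integral_congr_ae (ae_of_all _ hpt),
      integral_add (hZint.const_mul _) (integrable_const _), integral_const_mul, hintZ,
      integral_const, probReal_univ, one_smul, hmZp s]
    ring
  have partc : EvarZC = ∑ s, π s * (p s * (1 - p s)) := by
    rw [hEvarZC]
    exact Finset.sum_congr rfl fun s _ => by rw [hvar s]
  -- ====================  Part (b)  ====================
  -- nonemptiness and positivity
  have hΩ : Nonempty Ω := by
    by_contra h
    rw [not_nonempty_iff] at h
    have h1 := measure_univ (μ := μ)
    rw [Set.univ_eq_empty_iff.mpr h] at h1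
    simp at h1
  haveI hFS : Nonempty (Fin S) := hΩ.elim fun ω => ⟨C ω⟩
  have hEvar_pos : 0 < EvarZC := by
    rw [partc]
    refine Finset.sum_pos (fun s _ => ?_) Finset.univ_nonempty
    exact mul_pos (hπpos s) (mul_pos (hp01 s).1 (by linarith [(hp01 s).2]))
  -- L² facts
  have hZL2 : MemLp Z 2 μ := by
    refine (memLp_const (1 : ℝ)).of_le hZmeas.aestronglyMeasurable (ae_of_all _ fun ω => ?_)
    rcases hZ01 ω with h | h <;> simp [h]
  have hXc : ∀ a : Fin K, MemLp (fun ω => X ω a) 2 μ := fun a =>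
    hXL2.of_le ((measurable_pi_apply a).comp hXmeas).aestronglyMeasurable
      (ae_of_all _ fun ω => norm_le_pi_norm (X ω) a)
  have hY1c : ∀ b : Fin L, MemLp (fun ω => Y1 ω b) 2 μ := fun b =>
    hY1L2.of_le ((measurable_pi_apply b).comp hY1meas).aestronglyMeasurable
      (ae_of_all _ fun ω => norm_le_pi_norm (Y1 ω) b)
  have hY0c : ∀ b : Fin L, MemLp (fun ω => Y0 ω b) 2 μ := fun b =>
    hY0L2.of_le ((measurable_pi_apply b).comp hY0meas).aestronglyMeasurable
      (ae_of_all _ fun ω => norm_le_pi_norm (Y0 ω) b)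
  have hYmeas : Measurable Y := by
    rw [hY]
    exact measurable_pi_lambda _ fun j =>
      (hZmeas.mul ((measurable_pi_apply j).comp hY1meas)).add
        ((measurable_const.sub hZmeas).mul ((measurable_pi_apply j).comp hY0meas))
  have hYc : ∀ b : Fin L, MemLp (fun ω => Y ω b) 2 μ := by
    intro b
    refine MemLp.of_le ((hY1c b).norm.add ((hY0c b).norm))
      ((measurable_pi_apply b).comp hYmeas).aestronglyMeasurable (ae_of_all _ fun ω => ?_)
    simp only [Real.norm_eq_abs, Pi.add_apply]
    rw [abs_of_nonneg (by positivity : (0 : ℝ) ≤ |Y1 ω b| + |Y0 ω b|)]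
    rcases hZ01 ω with h | h
    · have hYe : Y ω b = Y0 ω b := by rw [hY]; simp [h]
      rw [hYe]; exact le_add_of_nonneg_left (abs_nonneg _)
    · have hYe : Y ω b = Y1 ω b := by rw [hY]; simp [h]
      rw [hYe]; exact le_add_of_nonneg_right (abs_nonneg _)
  have hUc : ∀ j : Fin (K + L), MemLp (fun ω => U ω j) 2 μ := by
    intro j
    refine Fin.addCases (motive := fun j => MemLp (fun ω => U ω j) 2 μ) ?_ ?_ j
    · intro a
      have he : (fun ω => U ω (Fin.castAdd L a)) = fun ω => X ω a := by
        funext ω; rw [hU]; exact Fin.append_left _ _ a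
      rw [he]; exact hXc a
    · intro b
      have he : (fun ω => U ω (Fin.natAdd K b)) = fun ω => Y ω b := by
        funext ω; rw [hU]; exact Fin.append_right _ _ b
      rw [he]; exact hYc b
  have hmUC : ∀ j, MemLp (fun ω => mU (C ω) j) 2 μ := by
    intro j
    refine MemLp.of_le (memLp_const (∑ s, ‖mU s j‖))
      ((measurable_of_countable (fun s : Fin S => mU s j)).comp hCmeas).aestronglyMeasurable
      (ae_of_all _ fun ω => ?_)
    calc ‖mU (C ω) j‖ ≤ ∑ s, ‖mU s j‖ :=
          Finset.single_le_sum (f := fun s => ‖mU s j‖) (fun s _ => norm_nonneg _)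
            (Finset.mem_univ (C ω))
      _ ≤ ‖∑ s, ‖mU s j‖‖ := le_abs_self _
  have hmZC : MemLp (fun ω => mZ (C ω)) 2 μ := by
    refine MemLp.of_le (memLp_const (∑ s, ‖mZ s‖))
      ((measurable_of_countable (fun s : Fin S => mZ s)).comp hCmeas).aestronglyMeasurable
      (ae_of_all _ fun ω => ?_)
    calc ‖mZ (C ω)‖ ≤ ∑ s, ‖mZ s‖ :=
          Finset.single_le_sum (f := fun s => ‖mZ s‖) (fun s _ => norm_nonneg _)
            (Finset.mem_univ (C ω))
      _ ≤ ‖∑ s, ‖mZ s‖‖ := le_abs_self _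
  have hUtilL2 : ∀ j, MemLp (fun ω => U ω j - mU (C ω) j) 2 μ := fun j =>
    (hUc j).sub (hmUC j)
  have hint1 : ∀ i j, Integrable
      (fun ω => (U ω i - mU (C ω) i) * (U ω j - mU (C ω) j)) μ := fun i j =>
    int_mul_of_memL2 (hUtilL2 i) (hUtilL2 j)
  have hint2 : ∀ j, Integrable (fun ω => (U ω j - mU (C ω) j) * Z ω) μ := fun j =>
    int_mul_of_memL2 (hUtilL2 j) hZL2
  have hint3 : ∀ j, Integrable (fun ω => (Z ω - mZ (C ω)) * U ω j) μ := fun j =>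
    int_mul_of_memL2 (hZL2.sub hmZC) (hUc j)
  -- E{cov(U|C)} agrees with the pooled within-stratum cross-moment matrix
  have hEE : EUtilUtil = EcovUC := by
    rw [hEUtilUtil, hEcovUC]
    ext i j
    simp only [Matrix.sum_apply, Matrix.smul_apply, smul_eq_mul, Matrix.of_apply, hcovUc]
    rw [← sum_setIntegral_fiber μ hCmeas (hint1 i j)]
    refine Finset.sum_congr rfl fun s _ => ?_
    rw [hcondInt s]
    exact (setIntegral_congr_fun (hStmeas s) fun ω hω => by
      rw [show C ω = s from hω]).symm
  -- the two cross moments coincide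
  have hAsZ : ∀ s : Fin S, ∫ ω in {ω | C ω = s}, Z ω ∂μ = π s * mZ s := by
    intro s
    rw [← hcondInt s Z, ← congrFun hmZ s]
  have hAsU : ∀ (s : Fin S) j, ∫ ω in {ω | C ω = s}, U ω j ∂μ = π s * mU s j := by
    intro s j
    rw [← hcondInt s (fun ω => U ω j), ← congrFun (congrFun hmU s) j]
  have key : EUtilZ = fun j => ∫ ω, (Z ω - mZ (C ω)) * U ω j ∂μ := by
    rw [hEUtilZ]
    funext j
    rw [← sum_setIntegral_fiber μ hCmeas (hint2 j), ← sum_setIntegral_fiber μ hCmeas (hint3 j)]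
    refine Finset.sum_congr rfl fun s _ => ?_
    have iU : IntegrableOn (fun ω => U ω j) {ω | C ω = s} μ :=
      ((hUc j).integrable one_le_two).integrableOn
    have iZ : IntegrableOn Z {ω | C ω = s} μ :=
      (hZL2.integrable one_le_two).integrableOn
    have iUZ : IntegrableOn (fun ω => U ω j * Z ω) {ω | C ω = s} μ :=
      (int_mul_of_memL2 (hUc j) hZL2).integrableOn
    have e1 : ∫ ω in {ω | C ω = s}, (U ω j - mU (C ω) j) * Z ω ∂μ
        = ∫ ω in {ω | C ω = s}, (U ω j * Z ω - mU s j * Z ω) ∂μ :=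
      setIntegral_congr_fun (hStmeas s) fun ω hω => by
        rw [show C ω = s from hω]; ring
    have e2 : ∫ ω in {ω | C ω = s}, (Z ω - mZ (C ω)) * U ω j ∂μ
        = ∫ ω in {ω | C ω = s}, (U ω j * Z ω - mZ s * U ω j) ∂μ :=
      setIntegral_congr_fun (hStmeas s) fun ω hω => by
        rw [show C ω = s from hω]; ring
    rw [e1, e2, integral_sub iUZ (iZ.const_mul _), integral_sub iUZ (iU.const_mul _),
      integral_const_mul, integral_const_mul, hAsZ s, hAsU s j]
    ring
  have partb : βSRUA = EvarZC • (EcovUC⁻¹ *ᵥ τSRU) := by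
    rw [hβSRUA, hEE, key, hτSRU, Matrix.mulVec_smul, smul_smul,
      mul_inv_cancel₀ hEvar_pos.ne', one_smul]
  exact ⟨parta, partb, partc⟩
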